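/- arXiv:2303.12554 — 2 statements merged into one kernel-verified Lean document; each statement's English description precedes it below -/
import Mathlib

section
/- Let a circle of radius a>0 in the xy-plane be parametrized by γ(α) = (a cos α, a sin α, 0). Given a point x = (x₁,x₂,x₃) ∈ ℝ³ not on the circle and with x₁²+x₂² > 0, define R²(α) = (a cos α − x₁)² + (a sin α − x₂)² + x₃², extended to complex α via the same algebraic formula. Then R²(α₀) = 0 for α₀ = atan2(x₂,x₁) ± i ln(λ + √(λ²−1)), where λ = (a² + x₁² + x₂² + x₃²)/(2a√(x₁²+x₂²)). -/
/-- Root of the (analytically continued) squared distance function for a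
circle of radius `a` in the `xy`-plane: for `α₀ = atan2(x₂,x₁) ± i ln(λ+√(λ²−1))`
with `λ = (a²+x₁²+x₂²+x₃²)/(2a√(x₁²+x₂²))`, one has `R²(α₀) = 0`. -/
theorem circle_root (a x₁ x₂ x₃ : ℝ) (ha : 0 < a) (hρ : 0 < x₁ ^ 2 + x₂ ^ 2)
    (hoff : ∀ α : ℝ, ¬ (x₁ = a * Real.cos α ∧ x₂ = a * Real.sin α ∧ x₃ = 0))
    (lam : ℝ)
    (hlam : lam = (a ^ 2 + x₁ ^ 2 + x₂ ^ 2 + x₃ ^ 2) / (2 * a * Real.sqrt (x₁ ^ 2 + x₂ ^ 2)))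
    (s : ℝ) (hs : s = 1 ∨ s = -1) (α₀ : ℂ)
    (hα₀ : α₀ = (Complex.arg ((x₁ : ℂ) + (x₂ : ℂ) * Complex.I) : ℂ) +
      (s : ℂ) * Complex.I * (Real.log (lam + Real.sqrt (lam ^ 2 - 1)) : ℂ)) :
    ((a : ℂ) * Complex.cos α₀ - (x₁ : ℂ)) ^ 2 +
      ((a : ℂ) * Complex.sin α₀ - (x₂ : ℂ)) ^ 2 + (x₃ : ℂ) ^ 2 = 0 := by
  set ρ : ℝ := Real.sqrt (x₁ ^ 2 + x₂ ^ 2) with hρdef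
  have hρpos : 0 < ρ := Real.sqrt_pos.mpr hρ
  have hρsq : ρ ^ 2 = x₁ ^ 2 + x₂ ^ 2 := Real.sq_sqrt hρ.le
  set z : ℂ := (x₁ : ℂ) + (x₂ : ℂ) * Complex.I with hzdef
  have hz : z ≠ 0 := by
    intro h
    rw [hzdef] at h
    have h1 : x₁ = 0 ∧ x₂ = 0 := by
      constructor <;> [have := congrArg Complex.re h; have := congrArg Complex.im h] <;>
        simpa using this
    nlinarith [h1.1, h1.2]
  have habs : ‖z‖ = ρ := by
    rw [hzdef, Complex.norm_def, Complex.normSq_add_mul_I]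
  set θ : ℝ := Complex.arg z with hθdef
  have hre : z.re = x₁ := by simp [hzdef]
  have him : z.im = x₂ := by simp [hzdef]
  have hcosθ : Real.cos θ = x₁ / ρ := by rw [hθdef, Complex.cos_arg hz, hre, habs]
  have hsinθ : Real.sin θ = x₂ / ρ := by rw [hθdef, Complex.sin_arg, him, habs]
  have hx1 : x₁ = ρ * Real.cos θ := by rw [hcosθ]; field_simp
  have hx2 : x₂ = ρ * Real.sin θ := by rw [hsinθ]; field_simp
  -- λ ≥ 1
  have hlam1 : 1 ≤ lam := by
    rw [hlam, le_div_iff₀ (by positivity)]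
    nlinarith [sq_nonneg (a - ρ), sq_nonneg x₃]
  have hsq : Real.sqrt (lam ^ 2 - 1) ^ 2 = lam ^ 2 - 1 :=
    Real.sq_sqrt (by nlinarith)
  set t : ℝ := Real.log (lam + Real.sqrt (lam ^ 2 - 1)) with htdef
  have hu : 0 < lam + Real.sqrt (lam ^ 2 - 1) := by
    have := Real.sqrt_nonneg (lam ^ 2 - 1); linarith
  have hcosht : Real.cosh t = lam := by
    rw [htdef, Real.cosh_log hu]
    have hmul : (lam + Real.sqrt (lam ^ 2 - 1)) * (lam - Real.sqrt (lam ^ 2 - 1)) = 1 := by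
      nlinarith
    have hinv : (lam + Real.sqrt (lam ^ 2 - 1))⁻¹ = lam - Real.sqrt (lam ^ 2 - 1) :=
      inv_eq_of_mul_eq_one_right hmul
    rw [hinv]; ring
  have hcosit : Complex.cos ((s : ℂ) * Complex.I * (t : ℂ)) = (lam : ℂ) := by
    have hrw : (s : ℂ) * Complex.I * (t : ℂ) = ((s * t : ℝ) : ℂ) * Complex.I := by
      push_cast; ring
    rw [hrw, Complex.cos_mul_I, ← Complex.ofReal_cosh, Complex.ofReal_inj]
    rcases hs with h | h <;> subst h <;> simp [Real.cosh_neg, hcosht]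
  have hc : Complex.cos (α₀ - (θ : ℂ)) = (lam : ℂ) := by
    have : α₀ - (θ : ℂ) = (s : ℂ) * Complex.I * (t : ℂ) := by
      rw [hα₀]; ring
    rw [this, hcosit]
  have key : (x₁ : ℂ) * Complex.cos α₀ + (x₂ : ℂ) * Complex.sin α₀ = (ρ : ℂ) * (lam : ℂ) := by
    have hx1c : (x₁ : ℂ) = (ρ : ℂ) * Complex.cos (θ : ℂ) := by
      rw [← Complex.ofReal_cos]; exact_mod_cast congrArg (fun r : ℝ => (r : ℂ)) hx1
    have hx2c : (x₂ : ℂ) = (ρ : ℂ) * Complex.sin (θ : ℂ) := by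
      rw [← Complex.ofReal_sin]; exact_mod_cast congrArg (fun r : ℝ => (r : ℂ)) hx2
    rw [hx1c, hx2c]
    have hsub := Complex.cos_sub α₀ (θ : ℂ)
    linear_combination (-(ρ : ℂ)) * hsub + (ρ : ℂ) * hc
  have h2 : lam * (2 * a * ρ) = a ^ 2 + x₁ ^ 2 + x₂ ^ 2 + x₃ ^ 2 := by
    rw [hlam]; field_simp
  have h2c : (lam : ℂ) * (2 * (a : ℂ) * (ρ : ℂ)) =
      (a : ℂ) ^ 2 + (x₁ : ℂ) ^ 2 + (x₂ : ℂ) ^ 2 + (x₃ : ℂ) ^ 2 := by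
    exact_mod_cast congrArg (fun r : ℝ => (r : ℂ)) h2
  linear_combination (a : ℂ) ^ 2 * Complex.sin_sq_add_cos_sq α₀ - 2 * (a : ℂ) * key - h2c
end

section
/- Let γ(θ,φ) = a(sin θ cos φ, sin θ sin φ, cos θ) parametrize a sphere of radius a > 0. Fix φ̄ ∈ [0,2π) and a point x = (x₁,x₂,x₃) not on the sphere, and assume it is not the case that x₃ = 0 and x₁ cos φ̄ + x₂ sin φ̄ = 0. Define R²(θ) = (a sin θ cos φ̄ − x₁)² + (a sin θ sin φ̄ − x₂)² + (a cos θ − x₃)², extended analytically to complex θ. Then R²(θ₀) = 0 for θ₀ = atan2(x₁ cos φ̄ + x₂ sin φ̄, x₃) ± i ln(λ + √(λ²−1)), where λ = (a² + x₁² + x₂² + x₃²)/(2a√((x₁ cos φ̄ + x₂ sin φ̄)² + x₃²)), and λ > 1. -/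
/-- Root in `θ` of the squared distance function for a sphere of radius `a`
at fixed azimuthal angle `φ̄`: `R²(θ₀)=0` for
`θ₀ = atan2(x₁cosφ̄+x₂sinφ̄, x₃) ± i ln(λ+√(λ²−1))`, with
`λ = (a²+x₁²+x₂²+x₃²)/(2a√((x₁cosφ̄+x₂sinφ̄)²+x₃²))`, and `λ > 1`. -/
theorem sphere_theta_root (a : ℝ) (ha : 0 < a)
    (φbar : ℝ) (hφ : φbar ∈ Set.Ico (0 : ℝ) (2 * π))
    (x₁ x₂ x₃ : ℝ) (hoff : x₁ ^ 2 + x₂ ^ 2 + x₃ ^ 2 ≠ a ^ 2)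
    (hnd : ¬ (x₃ = 0 ∧ x₁ * Real.cos φbar + x₂ * Real.sin φbar = 0))
    (lam : ℝ)
    (hlam : lam = (a ^ 2 + x₁ ^ 2 + x₂ ^ 2 + x₃ ^ 2) /
      (2 * a * Real.sqrt ((x₁ * Real.cos φbar + x₂ * Real.sin φbar) ^ 2 + x₃ ^ 2)))
    (s : ℝ) (hs : s = 1 ∨ s = -1) (θ₀ : ℂ)
    (hθ₀ : θ₀ = (Complex.arg (((x₃ : ℂ)) + ((x₁ * Real.cos φbar + x₂ * Real.sin φbar : ℝ) : ℂ) * Complex.I) : ℂ) +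
      (s : ℂ) * Complex.I * (Real.log (lam + Real.sqrt (lam ^ 2 - 1)) : ℂ)) :
    ((a : ℂ) * Complex.sin θ₀ * (Real.cos φbar : ℂ) - (x₁ : ℂ)) ^ 2 +
      ((a : ℂ) * Complex.sin θ₀ * (Real.sin φbar : ℂ) - (x₂ : ℂ)) ^ 2 +
      ((a : ℂ) * Complex.cos θ₀ - (x₃ : ℂ)) ^ 2 = 0 ∧
    1 < lam := by
  set c := x₁ * Real.cos φbar + x₂ * Real.sin φbar with hc
  set r := Real.sqrt (c ^ 2 + x₃ ^ 2) with hrdef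
  have hcx : 0 < c ^ 2 + x₃ ^ 2 := by
    rcases not_and_or.mp hnd with h | h
    · have := mul_self_pos.mpr h
      nlinarith [sq_nonneg c]
    · have := mul_self_pos.mpr h
      nlinarith [sq_nonneg x₃]
  have hr : 0 < r := Real.sqrt_pos.mpr hcx
  have hr2 : r ^ 2 = c ^ 2 + x₃ ^ 2 := Real.sq_sqrt hcx.le
  have hpy : Real.sin φbar ^ 2 + Real.cos φbar ^ 2 = 1 := Real.sin_sq_add_cos_sq φbar
  have hcle : c ^ 2 ≤ x₁ ^ 2 + x₂ ^ 2 := by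
    rw [hc]
    nlinarith [sq_nonneg (x₁ * Real.sin φbar - x₂ * Real.cos φbar)]
  have hrX : r ^ 2 ≤ x₁ ^ 2 + x₂ ^ 2 + x₃ ^ 2 := by nlinarith
  have hlt : 2 * a * r < a ^ 2 + (x₁ ^ 2 + x₂ ^ 2 + x₃ ^ 2) := by
    rcases eq_or_lt_of_le hrX with h | h
    · have hra : r - a ≠ 0 := by
        intro hra
        apply hoff
        have : r = a := by linarith [sub_eq_zero.mp hra]
        rw [← h, this]
      have h2 : 0 < (r - a) ^ 2 :=
        lt_of_le_of_ne (sq_nonneg _) (Ne.symm (pow_ne_zero 2 hra))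
      nlinarith
    · nlinarith [sq_nonneg (a - r)]
  have hlam1 : 1 < lam := by
    rw [hlam]
    rw [one_lt_div (by positivity)]
    linarith
  refine ⟨?_, hlam1⟩
  -- cosh of the log term equals lam
  set L := Real.log (lam + Real.sqrt (lam ^ 2 - 1)) with hL
  have hl1 : (0:ℝ) ≤ lam ^ 2 - 1 := by nlinarith
  have hsq : Real.sqrt (lam ^ 2 - 1) ^ 2 = lam ^ 2 - 1 := Real.sq_sqrt hl1
  have ht : 0 < lam + Real.sqrt (lam ^ 2 - 1) := by
    have := Real.sqrt_nonneg (lam ^ 2 - 1); linarith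
  have hcosh : Real.cosh L = lam := by
    rw [hL, Real.cosh_eq, Real.exp_log ht, Real.exp_neg, Real.exp_log ht]
    have hinv : (lam + Real.sqrt (lam ^ 2 - 1))⁻¹ = lam - Real.sqrt (lam ^ 2 - 1) := by
      refine inv_eq_of_mul_eq_one_right ?_
      nlinarith
    rw [hinv]; ring
  -- the point z and its argument
  set z : ℂ := (x₃ : ℂ) + (c : ℂ) * Complex.I with hz
  have hz0 : z ≠ 0 := by
    intro h
    apply hnd
    rw [hz] at h
    constructor
    · have := congrArg Complex.re h; simpa using this
    · have := congrArg Complex.im h; simpa using this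
  have habs : ‖z‖ = r := by
    rw [hz, Complex.norm_add_mul_I, hrdef]
    congr 1
    ring
  set α := Complex.arg z with hα
  have hcosα : Real.cos α = x₃ / r := by
    rw [hα, Complex.cos_arg hz0, habs, hz]
    simp
  have hsinα : Real.sin α = c / r := by
    rw [hα, Complex.sin_arg, habs, hz]
    simp
  have hrs : (r : ℂ) * (Real.sin α : ℂ) = (c : ℂ) := by
    have : r * Real.sin α = c := by rw [hsinα]; field_simp
    exact_mod_cast this
  have hrc : (r : ℂ) * (Real.cos α : ℂ) = (x₃ : ℂ) := by
    have : r * Real.cos α = x₃ := by rw [hcosα]; field_simp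
    exact_mod_cast this
  have hpyα : (Real.sin α : ℂ) ^ 2 + (Real.cos α : ℂ) ^ 2 = 1 := by
    exact_mod_cast Real.sin_sq_add_cos_sq α
  -- cos and sin of the imaginary part
  have hB_cos : Complex.cos ((s : ℂ) * Complex.I * (L : ℂ)) = (lam : ℂ) := by
    have h1 : (s : ℂ) * Complex.I * (L : ℂ) = ((s * L : ℝ) : ℂ) * Complex.I := by
      push_cast; ring
    rw [h1, Complex.cos_mul_I, ← Complex.ofReal_cosh]
    norm_cast
    rcases hs with rfl | rfl
    · simpa using hcosh
    · rw [neg_one_mul, Real.cosh_neg, hcosh]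
  have hB_sin : Complex.sin ((s : ℂ) * Complex.I * (L : ℂ)) =
      ((s * Real.sinh L : ℝ) : ℂ) * Complex.I := by
    have h1 : (s : ℂ) * Complex.I * (L : ℂ) = ((s * L : ℝ) : ℂ) * Complex.I := by
      push_cast; ring
    rw [h1, Complex.sin_mul_I, ← Complex.ofReal_sinh]
    norm_cast
    rcases hs with rfl | rfl
    · simp
    · rw [neg_one_mul, Real.sinh_neg]; ring
  have hsinθ : Complex.sin θ₀ = (Real.sin α : ℂ) * (lam : ℂ) +
      (Real.cos α : ℂ) * (((s * Real.sinh L : ℝ) : ℂ) * Complex.I) := by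
    rw [hθ₀, Complex.sin_add, ← Complex.ofReal_sin, ← Complex.ofReal_cos, hB_cos, hB_sin]
  have hcosθ : Complex.cos θ₀ = (Real.cos α : ℂ) * (lam : ℂ) -
      (Real.sin α : ℂ) * (((s * Real.sinh L : ℝ) : ℂ) * Complex.I) := by
    rw [hθ₀, Complex.cos_add, ← Complex.ofReal_sin, ← Complex.ofReal_cos, hB_cos, hB_sin]
  -- key identity
  have hkey : (c : ℂ) * Complex.sin θ₀ + (x₃ : ℂ) * Complex.cos θ₀ = (r : ℂ) * (lam : ℂ) := by
    rw [hsinθ, hcosθ, ← hrs, ← hrc]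
    linear_combination (r : ℂ) * (lam : ℂ) * hpyα
  have hlamr : 2 * a * r * lam = a ^ 2 + (x₁ ^ 2 + x₂ ^ 2 + x₃ ^ 2) := by
    rw [hlam]
    field_simp
    ring
  have hlamrc : 2 * (a : ℂ) * (r : ℂ) * (lam : ℂ) =
      (a : ℂ) ^ 2 + ((x₁ : ℂ) ^ 2 + (x₂ : ℂ) ^ 2 + (x₃ : ℂ) ^ 2) := by
    exact_mod_cast hlamr
  have hS2C2 : Complex.sin θ₀ ^ 2 + Complex.cos θ₀ ^ 2 = 1 := Complex.sin_sq_add_cos_sq θ₀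
  have hpyφc : (Real.cos φbar : ℂ) ^ 2 + (Real.sin φbar : ℂ) ^ 2 = 1 := by
    exact_mod_cast Real.cos_sq_add_sin_sq φbar
  have hcc : (c : ℂ) = (x₁ : ℂ) * (Real.cos φbar : ℂ) + (x₂ : ℂ) * (Real.sin φbar : ℂ) := by
    rw [hc]; push_cast; ring
  linear_combination (a : ℂ) ^ 2 * Complex.sin θ₀ ^ 2 * hpyφc + (a : ℂ) ^ 2 * hS2C2 +
    2 * (a : ℂ) * Complex.sin θ₀ * hcc - 2 * (a : ℂ) * hkey - hlamrc
end
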